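/- Let n ≥ 2 and suppose x : ℝ → ((Fin n → Bool) → ℝ) satisfies the TASEP master equation with rates α, β, h. Then the function t ↦ ⟨τ_{n-1}⟩(t) = Σ_{s : s (n-1) = true} x t s is differentiable and its derivative at every t equals α * ⟨ξ_{n-1}⟩(t) − h (n-1) * ⟨τ_{n-1} ξ_{n-2}⟩(t), where ⟨ξ_{n-1}⟩(t) = Σ_{s : s (n-1) = false} x t s and ⟨τ_{n-1} ξ_{n-2}⟩(t) = Σ_{s : s (n-1) = true ∧ s (n-2) = false} x t s. -/

import Mathlib

open Finset

/-- The occupation status of site `k` in state `s` (false if `k` is not a valid site). -/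
def occ (n : ℕ) (s : Fin n → Bool) (k : ℕ) : Bool :=
  if hk : k < n then s ⟨k, hk⟩ else false

/-- Update the occupation status of site `k` in state `s` to `b`. -/
def upd (n : ℕ) (s : Fin n → Bool) (k : ℕ) (b : Bool) : Fin n → Bool :=
  if hk : k < n then Function.update s ⟨k, hk⟩ b else s

/-- `x : ℝ → (Fin n → Bool) → ℝ` satisfies the TASEP master equation with entry rate `α`,
exit rate `β` and internal rates `h`. -/
def MasterEq (n : ℕ) (α β : ℝ) (h : ℕ → ℝ) (x : ℝ → (Fin n → Bool) → ℝ) : Prop :=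
  ∀ (s : Fin n → Bool) (t : ℝ),
    HasDerivAt (fun τ => x τ s)
      ((if occ n s (n-1) = true then α * x t (upd n s (n-1) false) else 0)
        + (if occ n s 0 = false then β * x t (upd n s 0 true) else 0)
        + (∑ k ∈ Finset.Icc 1 (n-1),
            if occ n s k = false ∧ occ n s (k-1) = true
              then h k * x t (upd n (upd n s k true) (k-1) false) else 0)
        - x t s * ((if occ n s (n-1) = false then α else 0)
            + (if occ n s 0 = true then β else 0)
            + ∑ k ∈ Finset.Icc 1 (n-1),
                if occ n s k = true ∧ occ n s (k-1) = false then h k else 0)) t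

lemma occ_upd_self {n : ℕ} (s : Fin n → Bool) {k : ℕ} (hk : k < n) (b : Bool) :
    occ n (upd n s k b) k = b := by
  simp [occ, upd, hk]

lemma occ_upd_ne {n : ℕ} (s : Fin n → Bool) {k l : ℕ} (b : Bool) (hne : l ≠ k) :
    occ n (upd n s k b) l = occ n s l := by
  by_cases hk : k < n <;> by_cases hl : l < n <;> simp [occ, upd, hk, hl]
  exact Function.update_of_ne
    (show (⟨l, hl⟩ : Fin n) ≠ ⟨k, hk⟩ from fun hc => hne (by simpa [Fin.ext_iff] using hc)) b s

lemma upd_upd {n : ℕ} (s : Fin n → Bool) (k : ℕ) (b c : Bool) :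
    upd n (upd n s k b) k c = upd n s k c := by
  by_cases hk : k < n <;> simp [upd, hk, Function.update_idem]

lemma upd_comm {n : ℕ} (s : Fin n → Bool) {k l : ℕ} (hkl : k ≠ l) (b c : Bool) :
    upd n (upd n s k b) l c = upd n (upd n s l c) k b := by
  by_cases hk : k < n <;> by_cases hl : l < n <;> simp [upd, hk, hl]
  exact Function.update_comm
    (show (⟨k, hk⟩ : Fin n) ≠ ⟨l, hl⟩ from fun hc => hkl (by simpa [Fin.ext_iff] using hc)) b c s

lemma upd_eq_self {n : ℕ} (s : Fin n → Bool) {k : ℕ} {b : Bool} (hb : occ n s k = b) :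
    upd n s k b = s := by
  by_cases hk : k < n
  · simp only [occ, dif_pos hk] at hb
    simp [upd, hk, ← hb, Function.update_eq_self]
  · simp [upd, hk]

theorem tasep_occupation_derivative_entry
    (n : ℕ) (hn : 2 ≤ n) (α β : ℝ) (h : ℕ → ℝ)
    (x : ℝ → (Fin n → Bool) → ℝ) (hx : MasterEq n α β h x) (t : ℝ) :
    HasDerivAt
      (fun τ => ∑ s ∈ Finset.univ.filter (fun s : Fin n → Bool => occ n s (n-1) = true), x τ s)
      (α * (∑ s ∈ Finset.univ.filter
            (fun s : Fin n → Bool => occ n s (n-1) = false), x t s)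
        - h (n-1) * (∑ s ∈ Finset.univ.filter
            (fun s : Fin n → Bool => occ n s (n-1) = true ∧ occ n s (n-2) = false), x t s)) t := by
  classical
  obtain ⟨m, rfl⟩ : ∃ m, n = m + 2 := ⟨n - 2, by omega⟩
  have e1 : m + 2 - 1 = m + 1 := rfl
  have e2 : m + 2 - 2 = m := rfl
  simp only [e1, e2]
  set S : Finset (Fin (m + 2) → Bool) :=
    univ.filter (fun s => occ (m + 2) s (m + 1) = true) with hS
  have hmem : ∀ s ∈ S, occ (m + 2) s (m + 1) = true := by
    intro s hs
    exact (mem_filter.mp hs).2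
  have hderiv : HasDerivAt (fun τ => ∑ s ∈ S, x τ s)
      (∑ s ∈ S,
        ((if occ (m+2) s (m+1) = true then α * x t (upd (m+2) s (m+1) false) else 0)
          + (if occ (m+2) s 0 = false then β * x t (upd (m+2) s 0 true) else 0)
          + (∑ k ∈ Finset.Icc 1 (m+1),
              if occ (m+2) s k = false ∧ occ (m+2) s (k-1) = true
                then h k * x t (upd (m+2) (upd (m+2) s k true) (k-1) false) else 0)
          - x t s * ((if occ (m+2) s (m+1) = false then α else 0)
              + (if occ (m+2) s 0 = true then β else 0)
              + ∑ k ∈ Finset.Icc 1 (m+1),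
                  if occ (m+2) s k = true ∧ occ (m+2) s (k-1) = false then h k else 0))) t :=
    HasDerivAt.fun_sum fun s _ => hx s t
  convert hderiv using 1
  -- entry inflow
  have hE : (∑ s ∈ S, if occ (m+2) s (m+1) = true then α * x t (upd (m+2) s (m+1) false) else 0)
      = α * ∑ s ∈ univ.filter (fun s : Fin (m+2) → Bool => occ (m+2) s (m+1) = false), x t s := by
    rw [Finset.mul_sum]
    refine Finset.sum_nbij' (fun s => upd (m+2) s (m+1) false)
      (fun s => upd (m+2) s (m+1) true) ?_ ?_ ?_ ?_ ?_
    · intro a ha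
      simp [mem_filter, occ_upd_self a (show m+1 < m+2 by omega) false]
    · intro a ha
      simp [hS, mem_filter, occ_upd_self a (show m+1 < m+2 by omega) true]
    · intro a ha
      show upd (m+2) (upd (m+2) a _ _) _ _ = a
      rw [upd_upd, upd_eq_self a (hmem a ha)]
    · intro a ha
      show upd (m+2) (upd (m+2) a _ _) _ _ = a
      rw [upd_upd, upd_eq_self a (mem_filter.mp ha).2]
    · intro a ha
      rw [if_pos (hmem a ha)]
  -- exit terms cancel
  have hB : (∑ s ∈ S, if occ (m+2) s 0 = false then β * x t (upd (m+2) s 0 true) else 0)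
      = ∑ s ∈ S, x t s * (if occ (m+2) s 0 = true then β else 0) := by
    have l1 : (∑ s ∈ S.filter (fun s => occ (m+2) s 0 = false),
        β * x t (upd (m+2) s 0 true))
        = ∑ s ∈ S, if occ (m+2) s 0 = false then β * x t (upd (m+2) s 0 true) else 0 :=
      Finset.sum_filter _ _
    have l2 : (∑ s ∈ S.filter (fun s => occ (m+2) s 0 = true), x t s * β)
        = ∑ s ∈ S, if occ (m+2) s 0 = true then x t s * β else 0 :=
      Finset.sum_filter _ _
    have l3 : (∑ s ∈ S, x t s * (if occ (m+2) s 0 = true then β else 0))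
        = ∑ s ∈ S, if occ (m+2) s 0 = true then x t s * β else 0 :=
      Finset.sum_congr rfl fun s _ => by
        by_cases hc : occ (m+2) s 0 = true <;> simp [hc]
    rw [← l1, l3, ← l2]
    refine Finset.sum_nbij' (fun s => upd (m+2) s 0 true)
      (fun s => upd (m+2) s 0 false) ?_ ?_ ?_ ?_ ?_
    · intro a ha
      rw [mem_filter] at ha ⊢
      refine ⟨?_, occ_upd_self a (show 0 < m+2 by omega) true⟩
      rw [hS, mem_filter]
      exact ⟨mem_univ _, by
        rw [occ_upd_ne a true (show m+1 ≠ 0 by omega)]; exact hmem a ha.1⟩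
    · intro a ha
      rw [mem_filter] at ha ⊢
      refine ⟨?_, occ_upd_self a (show 0 < m+2 by omega) false⟩
      rw [hS, mem_filter]
      exact ⟨mem_univ _, by
        rw [occ_upd_ne a false (show m+1 ≠ 0 by omega)]; exact hmem a ha.1⟩
    · intro a ha
      show upd (m+2) (upd (m+2) a _ _) _ _ = a
      rw [upd_upd, upd_eq_self a (mem_filter.mp ha).2]
    · intro a ha
      show upd (m+2) (upd (m+2) a _ _) _ _ = a
      rw [upd_upd, upd_eq_self a (mem_filter.mp ha).2]
    · intro a ha
      rw [mul_comm]
  -- internal hopping cancellation for k ≤ m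
  have hHk : ∀ k, 1 ≤ k → k ≤ m →
      (∑ s ∈ S, if occ (m+2) s k = false ∧ occ (m+2) s (k-1) = true
          then h k * x t (upd (m+2) (upd (m+2) s k true) (k-1) false) else 0)
      = ∑ s ∈ S, x t s * (if occ (m+2) s k = true ∧ occ (m+2) s (k-1) = false
          then h k else 0) := by
    intro k hk1 hk2
    have l1 : (∑ s ∈ S.filter (fun s => occ (m+2) s k = false ∧ occ (m+2) s (k-1) = true),
        h k * x t (upd (m+2) (upd (m+2) s k true) (k-1) false))
        = ∑ s ∈ S, if occ (m+2) s k = false ∧ occ (m+2) s (k-1) = true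
            then h k * x t (upd (m+2) (upd (m+2) s k true) (k-1) false) else 0 :=
      Finset.sum_filter _ _
    have l2 : (∑ s ∈ S.filter (fun s => occ (m+2) s k = true ∧ occ (m+2) s (k-1) = false),
        x t s * h k)
        = ∑ s ∈ S, if occ (m+2) s k = true ∧ occ (m+2) s (k-1) = false
            then x t s * h k else 0 :=
      Finset.sum_filter _ _
    have l3 : (∑ s ∈ S, x t s * (if occ (m+2) s k = true ∧ occ (m+2) s (k-1) = false
          then h k else 0))
        = ∑ s ∈ S, if occ (m+2) s k = true ∧ occ (m+2) s (k-1) = false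
            then x t s * h k else 0 :=
      Finset.sum_congr rfl fun s _ => by
        by_cases hc : occ (m+2) s k = true ∧ occ (m+2) s (k-1) = false <;> simp [hc]
    rw [← l1, l3, ← l2]
    refine Finset.sum_nbij' (fun s => upd (m+2) (upd (m+2) s k true) (k-1) false)
      (fun s => upd (m+2) (upd (m+2) s k false) (k-1) true) ?_ ?_ ?_ ?_ ?_
    · intro a ha
      rw [mem_filter] at ha ⊢
      obtain ⟨haS, hc⟩ := ha
      refine ⟨?_, ?_, occ_upd_self _ (show k-1 < m+2 by omega) false⟩
      · rw [hS, mem_filter]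
        refine ⟨mem_univ _, ?_⟩
        rw [occ_upd_ne _ false (show m+1 ≠ k-1 by omega),
          occ_upd_ne _ true (show m+1 ≠ k by omega)]
        exact hmem a haS
      · rw [occ_upd_ne _ false (show k ≠ k-1 by omega)]
        exact occ_upd_self _ (show k < m+2 by omega) true
    · intro a ha
      rw [mem_filter] at ha ⊢
      obtain ⟨haS, hc⟩ := ha
      refine ⟨?_, ?_, occ_upd_self _ (show k-1 < m+2 by omega) true⟩
      · rw [hS, mem_filter]
        refine ⟨mem_univ _, ?_⟩
        rw [occ_upd_ne _ true (show m+1 ≠ k-1 by omega),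
          occ_upd_ne _ false (show m+1 ≠ k by omega)]
        exact hmem a haS
      · rw [occ_upd_ne _ true (show k ≠ k-1 by omega)]
        exact occ_upd_self _ (show k < m+2 by omega) false
    · intro a ha
      have hak := (mem_filter.mp ha).2.1
      have hak1 := (mem_filter.mp ha).2.2
      show upd (m+2) (upd (m+2) (upd (m+2) (upd (m+2) a _ _) _ _) _ _) _ _ = a
      rw [upd_comm _ (show k-1 ≠ k by omega), upd_upd, upd_upd,
        upd_eq_self a hak, upd_eq_self a hak1]
    · intro a ha
      have hak := (mem_filter.mp ha).2.1
      have hak1 := (mem_filter.mp ha).2.2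
      show upd (m+2) (upd (m+2) (upd (m+2) (upd (m+2) a _ _) _ _) _ _) _ _ = a
      rw [upd_comm _ (show k-1 ≠ k by omega), upd_upd, upd_upd,
        upd_eq_self a hak, upd_eq_self a hak1]
    · intro a ha
      rw [mul_comm]
  -- top hopping inflow vanishes
  have hTin : (∑ s ∈ S, if occ (m+2) s (m+1) = false ∧ occ (m+2) s (m+1-1) = true
      then h (m+1) * x t (upd (m+2) (upd (m+2) s (m+1) true) (m+1-1) false) else 0) = 0 :=
    Finset.sum_eq_zero fun s hs => if_neg (by simp [hmem s hs])
  -- top hopping outflow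
  have hTout : (∑ s ∈ S, x t s * (if occ (m+2) s (m+1) = true ∧ occ (m+2) s (m+1-1) = false
        then h (m+1) else 0))
      = h (m+1) * ∑ s ∈ univ.filter
          (fun s : Fin (m+2) → Bool => occ (m+2) s (m+1) = true ∧ occ (m+2) s m = false),
          x t s := by
    rw [hS, Finset.mul_sum, Finset.sum_filter, Finset.sum_filter]
    refine Finset.sum_congr rfl fun s _ => ?_
    by_cases h1 : occ (m+2) s (m+1) = true <;> by_cases h2 : occ (m+2) s m = false <;>
      simp [h1, h2, Nat.add_sub_cancel, mul_comm]
  -- exit of α outflow vanishes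
  have hA : (∑ s ∈ S, x t s * (if occ (m+2) s (m+1) = false then α else 0)) = 0 :=
    Finset.sum_eq_zero fun s hs => by simp [hmem s hs]
  have step1 : (∑ s ∈ S,
        ((if occ (m+2) s (m+1) = true then α * x t (upd (m+2) s (m+1) false) else 0)
          + (if occ (m+2) s 0 = false then β * x t (upd (m+2) s 0 true) else 0)
          + (∑ k ∈ Finset.Icc 1 (m+1),
              if occ (m+2) s k = false ∧ occ (m+2) s (k-1) = true
                then h k * x t (upd (m+2) (upd (m+2) s k true) (k-1) false) else 0)
          - x t s * ((if occ (m+2) s (m+1) = false then α else 0)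
              + (if occ (m+2) s 0 = true then β else 0)
              + ∑ k ∈ Finset.Icc 1 (m+1),
                  if occ (m+2) s k = true ∧ occ (m+2) s (k-1) = false then h k else 0)))
      = ((∑ s ∈ S, if occ (m+2) s (m+1) = true then α * x t (upd (m+2) s (m+1) false) else 0)
          + (∑ s ∈ S, if occ (m+2) s 0 = false then β * x t (upd (m+2) s 0 true) else 0)
          + ∑ k ∈ Finset.Icc 1 (m+1), ∑ s ∈ S,
              if occ (m+2) s k = false ∧ occ (m+2) s (k-1) = true
                then h k * x t (upd (m+2) (upd (m+2) s k true) (k-1) false) else 0)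
        - ((∑ s ∈ S, x t s * (if occ (m+2) s (m+1) = false then α else 0))
          + (∑ s ∈ S, x t s * (if occ (m+2) s 0 = true then β else 0))
          + ∑ k ∈ Finset.Icc 1 (m+1), ∑ s ∈ S,
              x t s * (if occ (m+2) s k = true ∧ occ (m+2) s (k-1) = false
                then h k else 0)) := by
    rw [Finset.sum_sub_distrib]
    congr 1
    · rw [Finset.sum_add_distrib, Finset.sum_add_distrib, Finset.sum_comm]
    · simp only [mul_add, Finset.mul_sum]
      rw [Finset.sum_add_distrib, Finset.sum_add_distrib, Finset.sum_comm]
  rw [step1, Finset.sum_Icc_succ_top (show 1 ≤ m + 1 by omega),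
    Finset.sum_Icc_succ_top (show 1 ≤ m + 1 by omega), hE, hB, hA, hTin, hTout,
    Finset.sum_congr rfl fun k hk => hHk k (mem_Icc.mp hk).1 (mem_Icc.mp hk).2]
  ring
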